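/- arXiv:1903.01326 — 2 statements merged into one kernel-verified Lean document; each statement's English description precedes it below -/
import Mathlib

section
/- Let G be a finite simple graph with n vertices and nullity κ = η(G), and let G₁ be the subgraph induced on a connected component of G having n₁ ≥ 2 vertices, with adjacency matrix A₁. For each integer k ≥ 0 define γ₁^(k) = sqrt( ‖A₁^{k+1} e‖² / ‖A₁^{k} e‖² ), where e is the all-ones vector of length n₁ and ‖·‖ is the Euclidean norm. Then for every k ≥ 0, E(G) ≥ γ₁^(k) + (n − κ − 1) + ln|Υ_{n−κ}(G)| − ln γ₁^(k). -/
section helperlemmas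
open Matrix

lemma dot_mulVec_left {ι : Type*} [Fintype ι] (M : Matrix ι ι ℝ) (a b : ι → ℝ) :
    (M *ᵥ a) ⬝ᵥ b = a ⬝ᵥ (Mᵀ *ᵥ b) := by
  rw [Matrix.dotProduct_mulVec a Mᵀ b, Matrix.vecMul_transpose]

lemma spectral_core {ι : Type*} [Fintype ι] [DecidableEq ι] {A : Matrix ι ι ℝ}
    (hA : A.IsHermitian) (x : ι → ℝ) :
    ∃ y : ι → ℝ,
      (x ⬝ᵥ x = ∑ i, y i ^ 2) ∧
      (x ⬝ᵥ (A *ᵥ x) = ∑ i, hA.eigenvalues i * y i ^ 2) ∧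
      ((A *ᵥ x) ⬝ᵥ (A *ᵥ x) = ∑ i, (hA.eigenvalues i) ^ 2 * y i ^ 2) := by
  classical
  set U : Matrix ι ι ℝ := (hA.eigenvectorUnitary : Matrix ι ι ℝ) with hU
  have hUU : U * star U = 1 := (Matrix.mem_unitaryGroup_iff).mp hA.eigenvectorUnitary.2
  have hUU' : star U * U = 1 := (Matrix.mem_unitaryGroup_iff').mp hA.eigenvectorUnitary.2
  set D : Matrix ι ι ℝ := Matrix.diagonal (RCLike.ofReal ∘ hA.eigenvalues) with hD
  have hspec : A = U * D * star U := hA.spectral_theorem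
  set y : ι → ℝ := (star U) *ᵥ x with hy
  have hstarT : (star U)ᵀ = U := by
    ext i j; simp [Matrix.star_apply]
  have hyx : ∀ b : ι → ℝ, y ⬝ᵥ b = x ⬝ᵥ (U *ᵥ b) := by
    intro b
    rw [hy, dot_mulVec_left, hstarT]
  have h1 : x ⬝ᵥ x = ∑ i, y i ^ 2 := by
    have : y ⬝ᵥ y = x ⬝ᵥ (U *ᵥ ((star U) *ᵥ x)) := hyx y
    rw [Matrix.mulVec_mulVec, hUU, Matrix.one_mulVec] at this
    rw [← this]
    simp [dotProduct, sq]
  have hAx : A *ᵥ x = U *ᵥ (D *ᵥ y) := by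
    rw [hspec, Matrix.mul_assoc, ← Matrix.mulVec_mulVec, ← Matrix.mulVec_mulVec, hy]
  have hDy : ∀ i, (D *ᵥ y) i = hA.eigenvalues i * y i := by
    intro i; simp [hD, Matrix.mulVec_diagonal]
  have h2 : x ⬝ᵥ (A *ᵥ x) = ∑ i, hA.eigenvalues i * y i ^ 2 := by
    rw [hAx, ← hyx (D *ᵥ y)]
    simp only [dotProduct]
    refine Finset.sum_congr rfl fun i _ => ?_
    rw [hDy]; ring
  have h3 : (A *ᵥ x) ⬝ᵥ (A *ᵥ x) = ∑ i, (hA.eigenvalues i) ^ 2 * y i ^ 2 := by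
    rw [hAx, dot_mulVec_left]
    have : Uᵀ *ᵥ (U *ᵥ (D *ᵥ y)) = D *ᵥ y := by
      rw [Matrix.mulVec_mulVec]
      have hT : Uᵀ = star U := by ext i j; simp [Matrix.star_apply]
      rw [hT, hUU', Matrix.one_mulVec]
    rw [this]
    simp only [dotProduct]
    refine Finset.sum_congr rfl fun i _ => ?_
    rw [hDy]; ring
  exact ⟨y, h1, h2, h3⟩

lemma dot_mulVec_le_sup {ι : Type*} [Fintype ι] [DecidableEq ι] {A : Matrix ι ι ℝ}
    (hA : A.IsHermitian) {μ : ℝ} (hμ : ∀ i, hA.eigenvalues i ≤ μ) (x : ι → ℝ) :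
    x ⬝ᵥ (A *ᵥ x) ≤ μ * (x ⬝ᵥ x) := by
  obtain ⟨y, h1, h2, -⟩ := spectral_core hA x
  rw [h1, h2, Finset.mul_sum]
  exact Finset.sum_le_sum fun i _ => mul_le_mul_of_nonneg_right (hμ i) (sq_nonneg _)

lemma normsq_mulVec_le {ι : Type*} [Fintype ι] [DecidableEq ι] {A : Matrix ι ι ℝ}
    (hA : A.IsHermitian) {ρ : ℝ} (hρ : ∀ i, (hA.eigenvalues i) ^ 2 ≤ ρ ^ 2) (x : ι → ℝ) :
    (A *ᵥ x) ⬝ᵥ (A *ᵥ x) ≤ ρ ^ 2 * (x ⬝ᵥ x) := by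
  obtain ⟨y, h1, -, h3⟩ := spectral_core hA x
  rw [h1, h3, Finset.mul_sum]
  exact Finset.sum_le_sum fun i _ => mul_le_mul_of_nonneg_right (hρ i) (sq_nonneg _)

lemma eigbasis_dot {ι : Type*} [Fintype ι] [DecidableEq ι] {A : Matrix ι ι ℝ}
    (hA : A.IsHermitian) (j : ι) :
    (⇑(hA.eigenvectorBasis j) : ι → ℝ) ⬝ᵥ ⇑(hA.eigenvectorBasis j) = 1 := by
  have h : ‖hA.eigenvectorBasis j‖ = 1 := hA.eigenvectorBasis.orthonormal.1 j
  rw [EuclideanSpace.norm_eq] at h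
  have h2 : ∑ i, ‖hA.eigenvectorBasis j i‖ ^ 2 = 1 := by
    have := congrArg (· ^ 2) h
    simpa [Real.sq_sqrt (Finset.sum_nonneg fun i _ => sq_nonneg _)] using this
  rw [dotProduct]
  rw [← h2]
  refine Finset.sum_congr rfl fun i _ => ?_
  simp [Real.norm_eq_abs, sq_abs, sq]

lemma abs_eigenvalue_le_sup {ι : Type*} [Fintype ι] [DecidableEq ι] {A : Matrix ι ι ℝ}
    (hA : A.IsHermitian) (hpos : ∀ i j, 0 ≤ A i j) {μ : ℝ}
    (hμ : ∀ i, hA.eigenvalues i ≤ μ) (j : ι) : |hA.eigenvalues j| ≤ μ := by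
  set v : ι → ℝ := ⇑(hA.eigenvectorBasis j) with hv
  have heig : A *ᵥ v = hA.eigenvalues j • v := hA.mulVec_eigenvectorBasis j
  have hvv : v ⬝ᵥ v = 1 := eigbasis_dot hA j
  have hdot : v ⬝ᵥ (A *ᵥ v) = hA.eigenvalues j := by
    rw [heig, dotProduct_smul, hvv]; simp
  have habs : |v ⬝ᵥ (A *ᵥ v)| ≤ (fun i => |v i|) ⬝ᵥ (A *ᵥ fun i => |v i|) := by
    calc |v ⬝ᵥ (A *ᵥ v)| ≤ ∑ i, |v i * (A *ᵥ v) i| := Finset.abs_sum_le_sum_abs _ _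
    _ ≤ ∑ i, |v i| * ∑ k, A i k * |v k| := by
        refine Finset.sum_le_sum fun i _ => ?_
        rw [abs_mul]
        refine mul_le_mul_of_nonneg_left ?_ (abs_nonneg _)
        calc |(A *ᵥ v) i| ≤ ∑ k, |A i k * v k| := Finset.abs_sum_le_sum_abs _ _
        _ = ∑ k, A i k * |v k| := by
            refine Finset.sum_congr rfl fun k _ => ?_
            rw [abs_mul, abs_of_nonneg (hpos i k)]
    _ = (fun i => |v i|) ⬝ᵥ (A *ᵥ fun i => |v i|) := rfl
  have hray : (fun i => |v i|) ⬝ᵥ (A *ᵥ fun i => |v i|) ≤ μ * ((fun i => |v i|) ⬝ᵥ fun i => |v i|) :=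
    dot_mulVec_le_sup hA hμ _
  have habs2 : ((fun i => |v i|) ⬝ᵥ fun i => |v i|) = 1 := by
    rw [← hvv]; refine Finset.sum_congr rfl fun i _ => ?_; simp [abs_mul_abs_self]
  rw [← hdot]
  calc |v ⬝ᵥ (A *ᵥ v)| ≤ μ * ((fun i => |v i|) ⬝ᵥ fun i => |v i|) := le_trans habs hray
  _ = μ := by rw [habs2, mul_one]

lemma sub_log_mono {x y : ℝ} (hy : 1 ≤ y) (hxy : y ≤ x) :
    y - Real.log y ≤ x - Real.log x := by
  have hy0 : 0 < y := lt_of_lt_of_le one_pos hy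
  have hx0 : 0 < x := lt_of_lt_of_le hy0 hxy
  have h1 : Real.log x - Real.log y = Real.log (x / y) :=
    (Real.log_div hx0.ne' hy0.ne').symm
  have h2 : Real.log (x / y) ≤ x / y - 1 :=
    Real.log_le_sub_one_of_pos (div_pos hx0 hy0)
  have h3 : x / y - 1 ≤ x - y := by
    have he : x / y - 1 = (x - y) / y := by field_simp
    have : (x - y) / y ≤ x - y := div_le_self (by linarith) hy
    linarith
  linarith

end helperlemmas


open Finset

/-- The adjacency matrix of a simple graph, as a real matrix, is Hermitian. -/
lemma SimpleGraph.adjMatrix_isHermitian {V : Type*} [Fintype V]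
    (G : SimpleGraph V) [DecidableRel G.Adj] : (G.adjMatrix ℝ).IsHermitian := by
  unfold Matrix.IsHermitian
  ext i j
  simp [Matrix.conjTranspose_apply, SimpleGraph.adj_comm]

/-- The energy of a graph: the sum of the absolute values of the eigenvalues of
its adjacency matrix. -/
noncomputable def SimpleGraph.energy {n : ℕ} (G : SimpleGraph (Fin n))
    [DecidableRel G.Adj] : ℝ :=
  ∑ i, |(G.adjMatrix_isHermitian).eigenvalues i|

/-- The nullity of a graph: the multiplicity of `0` as an eigenvalue of its
adjacency matrix. -/
noncomputable def SimpleGraph.nullity {n : ℕ} (G : SimpleGraph (Fin n))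
    [DecidableRel G.Adj] : ℕ :=
  (Finset.univ.filter fun i => (G.adjMatrix_isHermitian).eigenvalues i = 0).card

/-- `Υ_{n-κ}(G)`: the product of the nonzero eigenvalues of `G`, i.e. the
`(n-κ)`-th elementary symmetric function of the eigenvalues when `κ` is the
nullity of `G`. -/
noncomputable def SimpleGraph.prodNonzeroEig {n : ℕ} (G : SimpleGraph (Fin n))
    [DecidableRel G.Adj] : ℝ :=
  ∏ i ∈ Finset.univ.filter
      (fun i => (G.adjMatrix_isHermitian).eigenvalues i ≠ 0),
    (G.adjMatrix_isHermitian).eigenvalues i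
/-- Adjacency in an induced subgraph is decidable. -/
instance instDecidableRelInduceAdj {n : ℕ} (G : SimpleGraph (Fin n))
    [h : DecidableRel G.Adj] (s : Set (Fin n)) :
    DecidableRel (SimpleGraph.induce s G).Adj :=
  fun a b => h a b

open scoped Matrix in
theorem graph_energy_lower_bound_walk_sequence {n : ℕ}
    (G : SimpleGraph (Fin n)) [DecidableRel G.Adj]
    (κ : ℕ) (hκ : κ = G.nullity)
    (s : Finset (Fin n))
    (hcomp : ∃ c : G.ConnectedComponent, (↑s : Set (Fin n)) = c.supp)
    (hcard : 2 ≤ s.card)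
    (A₁ : Matrix ↥(↑s : Set (Fin n)) ↥(↑s : Set (Fin n)) ℝ)
    (hA₁ : A₁ = (SimpleGraph.induce (↑s : Set (Fin n)) G).adjMatrix ℝ)
    (γ₁ : ℕ → ℝ)
    (hγ₁ : ∀ k, γ₁ k =
      Real.sqrt ((∑ v, ((A₁ ^ (k + 1)) *ᵥ (fun _ => (1 : ℝ))) v ^ 2) /
        (∑ v, ((A₁ ^ k) *ᵥ (fun _ => (1 : ℝ))) v ^ 2))) :
    ∀ k : ℕ,
      G.energy ≥
        γ₁ k + ((n : ℝ) - κ - 1) +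
          Real.log |G.prodNonzeroEig| - Real.log (γ₁ k) := by
  intro k
  obtain ⟨c, hc⟩ := hcomp
  classical
  -- basic membership facts
  have hmem : ∀ a : Fin n, a ∈ s ↔ G.connectedComponentMk a = c := by
    intro a
    rw [← SimpleGraph.ConnectedComponent.mem_supp_iff, ← hc]
    exact Iff.rfl
  have hadjmem : ∀ {a b : Fin n}, G.Adj a b → a ∈ s → b ∈ s := by
    intro a b hab ha
    rw [hmem] at ha ⊢
    rw [← ha]
    exact (SimpleGraph.ConnectedComponent.connectedComponentMk_eq_of_adj hab).symm
  have hnb : ∀ v : ↥(↑s : Set (Fin n)), ∃ u : ↥(↑s : Set (Fin n)), G.Adj ↑v ↑u := by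
    rintro ⟨v, hv⟩
    have hv' : v ∈ s := hv
    obtain ⟨u, hu, hne⟩ := Finset.exists_mem_ne (lt_of_lt_of_le one_lt_two hcard) v
    have hreach : G.Reachable v u :=
      SimpleGraph.ConnectedComponent.exact
        (((hmem v).mp hv').trans ((hmem u).mp hu).symm)
    obtain ⟨p⟩ := hreach
    cases p with
    | nil => exact absurd rfl hne.symm
    | @cons _ b _ h q =>
      have hb : b ∈ s := hadjmem h hv'
      exact ⟨⟨b, hb⟩, h⟩
  have hA₁app : ∀ v u : ↥(↑s : Set (Fin n)),
      A₁ v u = if G.Adj ↑v ↑u then 1 else 0 := by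
    intro v u
    rw [hA₁]
    rfl
  have hA₁nonneg : ∀ v u, 0 ≤ A₁ v u := by
    intro v u; rw [hA₁app]; split <;> norm_num
  -- extension by zero
  set B : Matrix (Fin n) (Fin n) ℝ := G.adjMatrix ℝ with hBdef
  set Ext : (↥(↑s : Set (Fin n)) → ℝ) → (Fin n → ℝ) :=
    fun y i => if h : i ∈ (↑s : Set (Fin n)) then y ⟨i, h⟩ else 0 with hExt
  have hsum : ∀ f : Fin n → ℝ, (∀ i, i ∉ s → f i = 0) →
      ∑ i, f i = ∑ v : ↥(↑s : Set (Fin n)), f ↑v := by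
    intro f hf
    rw [← Finset.sum_subset (Finset.subset_univ s) (fun i _ hi => hf i hi)]
    exact Finset.sum_subtype s (fun x => Finset.mem_coe.symm) f
  have hExtDot : ∀ y z : ↥(↑s : Set (Fin n)) → ℝ,
      (Ext y) ⬝ᵥ (Ext z) = ∑ v, y v * z v := by
    intro y z
    show ∑ i, Ext y i * Ext z i = _
    rw [hsum _ (fun i hi => by simp [hExt, hi])]
    refine Finset.sum_congr rfl fun v _ => ?_
    simp [hExt]
  have hExtMulVec : ∀ y : ↥(↑s : Set (Fin n)) → ℝ, B *ᵥ Ext y = Ext (A₁ *ᵥ y) := by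
    intro y
    funext i
    by_cases hi : i ∈ s
    · have hrhs : Ext (A₁ *ᵥ y) i = ∑ u, A₁ ⟨i, hi⟩ u * y u := by
        simp only [hExt]
        rw [dif_pos (Finset.mem_coe.mpr hi)]
        rfl
      have hlhs : (B *ᵥ Ext y) i = ∑ j, B i j * Ext y j := rfl
      rw [hrhs, hlhs, hsum _ (fun j hj => by simp [hExt, hj])]
      refine Finset.sum_congr rfl fun u _ => ?_
      have h1 : B i ↑u = A₁ ⟨i, hi⟩ u := by
        rw [hA₁app, hBdef]
        simp [SimpleGraph.adjMatrix_apply]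
      have h2 : Ext y ↑u = y u := by simp [hExt]
      rw [h1, h2]
    · have hrhs : Ext (A₁ *ᵥ y) i = 0 := by simp [hExt, hi]
      rw [hrhs]
      show ∑ j, B i j * Ext y j = 0
      refine Finset.sum_eq_zero fun j _ => ?_
      by_cases hj : j ∈ s
      · have hBij : B i j = 0 := by
          rw [hBdef]
          simp only [SimpleGraph.adjMatrix_apply, ite_eq_right_iff]
          intro hadj
          exact absurd (hadjmem (G.adj_symm hadj) hj) hi
        rw [hBij, zero_mul]
      · have : Ext y j = 0 := by simp [hExt, hj]
        rw [this, mul_zero]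
  have hExtPow : ∀ (m : ℕ) (y : ↥(↑s : Set (Fin n)) → ℝ),
      (B ^ m) *ᵥ Ext y = Ext ((A₁ ^ m) *ᵥ y) := by
    intro m
    induction m with
    | zero => intro y; simp [Matrix.one_mulVec]
    | succ m ih =>
      intro y
      rw [pow_succ', ← Matrix.mulVec_mulVec, ih, hExtMulVec, Matrix.mulVec_mulVec, ← pow_succ']
  -- the walk vectors
  set w : ℕ → (↥(↑s : Set (Fin n)) → ℝ) := fun m => (A₁ ^ m) *ᵥ (fun _ => 1) with hw
  set W : ℕ → ℝ := fun m => ∑ v, (w m v) ^ 2 with hWdef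
  have hwsucc : ∀ m, w (m + 1) = A₁ *ᵥ w m := by
    intro m
    rw [hw]
    show (A₁ ^ (m+1)) *ᵥ _ = _
    rw [pow_succ', ← Matrix.mulVec_mulVec]
  have hw1 : ∀ m v, 1 ≤ w m v := by
    intro m
    induction m with
    | zero => intro v; simp [hw, Matrix.one_mulVec]
    | succ m ih =>
      intro v
      obtain ⟨u₀, hadj⟩ := hnb v
      have hterm : (1 : ℝ) ≤ A₁ v u₀ * w m u₀ := by
        rw [hA₁app, if_pos hadj, one_mul]
        exact ih u₀
      calc (1 : ℝ) ≤ A₁ v u₀ * w m u₀ := hterm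
      _ ≤ ∑ u, A₁ v u * w m u :=
          Finset.single_le_sum (f := fun u => A₁ v u * w m u)
            (fun u _ => mul_nonneg (hA₁nonneg v u) (le_trans zero_le_one (ih u)))
            (Finset.mem_univ u₀)
      _ = w (m + 1) v := by rw [hwsucc m]; rfl
  have hv₀ : ∃ v₀ : Fin n, v₀ ∈ s := by
    obtain ⟨v₀, hv₀⟩ := Finset.card_pos.mp (lt_of_lt_of_le two_pos hcard)
    exact ⟨v₀, hv₀⟩
  obtain ⟨v₀, hv₀⟩ := hv₀
  haveI : Nonempty ↥(↑s : Set (Fin n)) := ⟨⟨v₀, hv₀⟩⟩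
  have hWpos : ∀ m, 0 < W m := by
    intro m
    refine Finset.sum_pos (fun v _ => ?_) Finset.univ_nonempty
    have := hw1 m v
    positivity
  -- Cauchy--Schwarz and monotonicity of W
  have hA₁symm : A₁ᵀ = A₁ := by rw [hA₁]; exact SimpleGraph.transpose_adjMatrix _
  have hWmid : ∀ m, W (m + 1) = ∑ v, w m v * w (m + 2) v := by
    intro m
    have e1 : ∀ a b : ℕ, (w a) ⬝ᵥ (w b) = (fun _ => (1:ℝ)) ⬝ᵥ ((A₁ ^ (a + b)) *ᵥ (fun _ => 1)) := by
      intro a b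
      rw [hw]
      show ((A₁ ^ a) *ᵥ _) ⬝ᵥ ((A₁ ^ b) *ᵥ _) = _
      rw [dot_mulVec_left, Matrix.transpose_pow, hA₁symm, Matrix.mulVec_mulVec,
        ← pow_add]
    have e2 : (w (m+1)) ⬝ᵥ (w (m+1)) = (w m) ⬝ᵥ (w (m+2)) := by
      rw [e1, e1]
      ring_nf
    have e3 : W (m+1) = (w (m+1)) ⬝ᵥ (w (m+1)) := by
      rw [hWdef]
      exact Finset.sum_congr rfl fun v _ => sq (w (m+1) v) ▸ by ring
    rw [e3, e2]
    rfl
  have hWmono : ∀ m, W m ≤ W (m + 1) := by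
    intro m
    induction m with
    | zero =>
      refine Finset.sum_le_sum fun v _ => ?_
      have h1 : w 0 v = 1 := by simp [hw, Matrix.one_mulVec]
      have h2 := hw1 1 v
      rw [h1]
      nlinarith
    | succ m ih =>
      have hcs : (W (m+1)) ^ 2 ≤ W m * W (m+2) := by
        rw [hWmid m]
        exact Finset.sum_mul_sq_le_sq_mul_sq Finset.univ (w m) (w (m+2))
      have h2 : W m * W (m+2) ≤ W (m+1) * W (m+2) :=
        mul_le_mul_of_nonneg_right ih (hWpos (m+2)).le
      have h3 : W (m+1) * W (m+1) ≤ W (m+1) * W (m+2) := by nlinarith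
      exact le_of_mul_le_mul_left h3 (hWpos (m+1))
  -- spectral quantities of G
  have hB : B.IsHermitian := G.adjMatrix_isHermitian
  set ev : Fin n → ℝ := hB.eigenvalues with hev
  have hn2 : 2 ≤ n := le_trans hcard (by simpa using Finset.card_le_univ s)
  haveI : Nonempty (Fin n) := ⟨⟨0, by omega⟩⟩
  set μ : ℝ := Finset.univ.sup' Finset.univ_nonempty ev with hμdef
  have hμle : ∀ i, ev i ≤ μ := fun i => Finset.le_sup' ev (Finset.mem_univ i)
  have hBnonneg : ∀ i j, 0 ≤ B i j := by
    intro i j; rw [hBdef]; simp only [SimpleGraph.adjMatrix_apply]; split <;> norm_num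
  have hμ0 : 0 ≤ μ := by
    set i₁ : Fin n := Classical.arbitrary (Fin n)
    have h := dot_mulVec_le_sup hB hμle (Pi.single i₁ 1)
    have h1 : (Pi.single i₁ 1 : Fin n → ℝ) ⬝ᵥ (B *ᵥ Pi.single i₁ 1) = 0 := by
      rw [Matrix.mulVec_single, single_dotProduct, one_mul, MulOpposite.op_one, one_smul, hBdef]
      simp
    have h2 : (Pi.single i₁ 1 : Fin n → ℝ) ⬝ᵥ Pi.single i₁ 1 = 1 := by
      rw [single_dotProduct, one_mul, Pi.single_eq_same]
    rw [h1, h2, mul_one] at h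
    exact h
  have hevabs : ∀ j, |ev j| ≤ μ := fun j => abs_eigenvalue_le_sup hB hBnonneg hμle j
  have hevsq : ∀ j, ev j ^ 2 ≤ μ ^ 2 := by
    intro j
    obtain ⟨hl, hr⟩ := abs_le.mp (hevabs j)
    nlinarith
  -- relating γ₁ to W and to μ
  have hγ : γ₁ k = Real.sqrt (W (k+1) / W k) := hγ₁ k
  have hγ1 : 1 ≤ γ₁ k := by
    rw [hγ]
    have h1 : 1 ≤ W (k+1) / W k := (one_le_div (hWpos k)).mpr (hWmono k)
    calc (1:ℝ) = Real.sqrt 1 := Real.sqrt_one.symm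
    _ ≤ _ := Real.sqrt_le_sqrt h1
  have hWγ : W (k + 1) ≤ μ ^ 2 * W k := by
    have hE1 : Ext (w (k+1)) = B *ᵥ Ext (w k) := by
      have h1 : Ext (w (k+1)) = B ^ (k+1) *ᵥ Ext (fun _ => 1) := (hExtPow (k+1) _).symm
      have h2 : Ext (w k) = B ^ k *ᵥ Ext (fun _ => 1) := (hExtPow k _).symm
      rw [h1, h2, Matrix.mulVec_mulVec, ← pow_succ']
    have hWsq : ∀ m, W m = Ext (w m) ⬝ᵥ Ext (w m) := by
      intro m
      rw [hExtDot]
      exact Finset.sum_congr rfl fun v _ => by ring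
    calc W (k+1) = Ext (w (k+1)) ⬝ᵥ Ext (w (k+1)) := hWsq (k+1)
    _ = (B *ᵥ Ext (w k)) ⬝ᵥ (B *ᵥ Ext (w k)) := by rw [hE1]
    _ ≤ μ ^ 2 * (Ext (w k) ⬝ᵥ Ext (w k)) := normsq_mulVec_le hB hevsq _
    _ = μ ^ 2 * W k := by rw [← hWsq k]
  have hγμ : γ₁ k ≤ μ := by
    rw [hγ]
    have h1 : W (k+1) / W k ≤ μ ^ 2 := (div_le_iff₀ (hWpos k)).mpr (by linarith)
    calc Real.sqrt (W (k+1) / W k) ≤ Real.sqrt (μ ^ 2) := Real.sqrt_le_sqrt h1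
    _ = μ := Real.sqrt_sq hμ0
  have hμ1 : 1 ≤ μ := le_trans hγ1 hγμ
  have hμpos : 0 < μ := lt_of_lt_of_le one_pos hμ1
  -- final assembly
  set T : Finset (Fin n) := Finset.univ.filter (fun i => ev i ≠ 0) with hT
  have hpart : κ + T.card = n := by
    rw [hκ]
    have := Finset.card_filter_add_card_filter_not
      (s := (Finset.univ : Finset (Fin n))) (p := fun i => ev i = 0)
    simpa [SimpleGraph.nullity, hT] using this
  have hTcard : (T.card : ℝ) = (n : ℝ) - κ := by
    have : (κ : ℝ) + T.card = n := by exact_mod_cast hpart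
    linarith
  obtain ⟨i₀, -, hi₀⟩ := Finset.exists_mem_eq_sup' (Finset.univ_nonempty) ev
  have hi₀μ : ev i₀ = μ := hi₀.symm
  have hi₀T : i₀ ∈ T := by
    rw [hT, Finset.mem_filter]
    exact ⟨Finset.mem_univ _, by rw [hi₀μ]; exact ne_of_gt hμpos⟩
  have hEnergy : G.energy = ∑ i ∈ T, |ev i| := by
    rw [SimpleGraph.energy, ← Finset.sum_filter_add_sum_filter_not Finset.univ
      (fun i => ev i ≠ 0) (fun i => |ev i|)]
    have hz : ∑ i ∈ Finset.univ.filter (fun i => ¬ ev i ≠ 0), |ev i| = 0 := by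
      refine Finset.sum_eq_zero fun i hi => ?_
      rw [Finset.mem_filter] at hi
      have : ev i = 0 := not_not.mp hi.2
      rw [this, abs_zero]
    rw [hz, add_zero]
  have hsplit : ∑ i ∈ T, |ev i| = |ev i₀| + ∑ i ∈ T.erase i₀, |ev i| :=
    (Finset.add_sum_erase T _ hi₀T).symm
  have hlogsum : Real.log |G.prodNonzeroEig| = ∑ i ∈ T, Real.log |ev i| := by
    have h1 : G.prodNonzeroEig = ∏ i ∈ T, ev i := rfl
    rw [h1, Finset.abs_prod, Real.log_prod]
    intro i hi
    rw [hT, Finset.mem_filter] at hi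
    exact abs_ne_zero.mpr hi.2
  have hcardT1 : 1 ≤ T.card := Finset.card_pos.mpr ⟨i₀, hi₀T⟩
  have heraselog : ∑ i ∈ T.erase i₀, Real.log |ev i| =
      (∑ i ∈ T, Real.log |ev i|) - Real.log |ev i₀| :=
    Finset.sum_erase_eq_sub hi₀T
  have herase1 : ∑ _i ∈ T.erase i₀, (1 : ℝ) = (T.card : ℝ) - 1 := by
    rw [Finset.sum_const, Finset.card_erase_of_mem hi₀T]
    rw [nsmul_eq_mul, mul_one]
    push_cast [Nat.cast_sub hcardT1]
    ring
  have hlower : ∀ i ∈ T.erase i₀, 1 + Real.log |ev i| ≤ |ev i| := by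
    intro i hi
    have hiT := Finset.mem_of_mem_erase hi
    rw [hT, Finset.mem_filter] at hiT
    have := Real.log_le_sub_one_of_pos (abs_pos.mpr hiT.2)
    linarith
  have hsum2 : (T.card : ℝ) - 1 + ((∑ i ∈ T, Real.log |ev i|) - Real.log |ev i₀|)
      ≤ ∑ i ∈ T.erase i₀, |ev i| := by
    rw [← herase1, ← heraselog, ← Finset.sum_add_distrib]
    exact Finset.sum_le_sum hlower
  have habsi₀ : |ev i₀| = μ := by rw [hi₀μ, abs_of_pos hμpos]
  have hlogi₀ : Real.log |ev i₀| = Real.log μ := by rw [habsi₀]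
  have hmono := sub_log_mono hγ1 hγμ
  rw [hEnergy, hsplit, habsi₀, hlogsum]
  rw [hlogi₀] at hsum2
  rw [hTcard] at hsum2
  linarith
end

section
/- Let G be a connected finite simple graph with n ≥ 2 vertices whose adjacency matrix A = A(G) is nonsingular (det A ≠ 0). For each integer k ≥ 0 define γ^(k) = sqrt( ‖A^{k+1} e‖² / ‖A^{k} e‖² ), where e is the all-ones vector and ‖·‖ is the Euclidean norm. Then for every k ≥ 0, E(G) ≥ γ^(k) + (n − 1) + ln|det A| − ln γ^(k). -/
open Finset

section AuxLemmas

open Matrix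

variable {n : ℕ}

/-- Orthogonal matrices preserve the dot product of a vector with itself. -/
lemma aux_dot_preserve (U : Matrix (Fin n) (Fin n) ℝ) (hU : Uᵀ * U = 1)
    (u : Fin n → ℝ) : (U *ᵥ u) ⬝ᵥ (U *ᵥ u) = u ⬝ᵥ u := by
  have h1 : U *ᵥ u = u ᵥ* Uᵀ := (Matrix.vecMul_transpose U u).symm
  rw [Matrix.dotProduct_mulVec, h1, Matrix.vecMul_vecMul, hU, Matrix.vecMul_one]

variable (G : SimpleGraph (Fin n)) [DecidableRel G.Adj]

omit [DecidableRel G.Adj] in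
lemma aux_exists_adj (hconn : G.Connected) (hn : 2 ≤ n) (i : Fin n) :
    ∃ j, G.Adj i j := by
  have : Nontrivial (Fin n) := Fin.nontrivial_iff_two_le.mpr hn
  obtain ⟨j, hj⟩ := exists_ne i
  obtain ⟨w⟩ := hconn.preconnected i j
  cases w with
  | nil => exact absurd rfl hj
  | cons h _ => exact ⟨_, h⟩

lemma aux_one_le (hconn : G.Connected) (hn : 2 ≤ n) :
    ∀ k (i : Fin n), (1:ℝ) ≤ (((G.adjMatrix ℝ) ^ k) *ᵥ (fun _ => (1:ℝ))) i := by
  intro k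
  induction k with
  | zero => intro i; simp [Matrix.one_mulVec]
  | succ k ih =>
    intro i
    rw [pow_succ', ← Matrix.mulVec_mulVec, SimpleGraph.adjMatrix_mulVec_apply]
    obtain ⟨j, hj⟩ := aux_exists_adj G hconn hn i
    calc (1:ℝ) ≤ _ := ih j
    _ ≤ _ := Finset.single_le_sum (f := fun j => (((G.adjMatrix ℝ) ^ k) *ᵥ (fun _ => (1:ℝ))) j)
        (fun x _ => le_trans zero_le_one (ih x)) (by rwa [SimpleGraph.mem_neighborFinset])

lemma aux_mono (hconn : G.Connected) (hn : 2 ≤ n) (k : ℕ) :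
    (∑ v, (((G.adjMatrix ℝ) ^ k) *ᵥ (fun _ => (1:ℝ))) v ^ 2) ≤
    (∑ v, (((G.adjMatrix ℝ) ^ (k+1)) *ᵥ (fun _ => (1:ℝ))) v ^ 2) := by
  set w : Fin n → ℝ := ((G.adjMatrix ℝ) ^ k) *ᵥ (fun _ => (1:ℝ)) with hw
  have hw1 : ∀ i, (1:ℝ) ≤ w i := aux_one_le G hconn hn k
  have hstep : ∀ i, (((G.adjMatrix ℝ) ^ (k+1)) *ᵥ (fun _ => (1:ℝ))) i
      = ∑ j ∈ G.neighborFinset i, w j := by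
    intro i
    rw [pow_succ', ← Matrix.mulVec_mulVec, SimpleGraph.adjMatrix_mulVec_apply]
  calc ∑ v, w v ^ 2
      ≤ ∑ v, (G.degree v : ℝ) * w v ^ 2 := by
        refine Finset.sum_le_sum fun v _ => ?_
        have hd : (1:ℝ) ≤ (G.degree v : ℝ) := by
          have := G.degree_pos_iff_exists_adj v |>.mpr (aux_exists_adj G hconn hn v)
          exact_mod_cast this
        nlinarith [hw1 v]
    _ = ∑ v, ∑ i ∈ G.neighborFinset v, w v ^ 2 := by
        simp [Finset.sum_const, SimpleGraph.card_neighborFinset_eq_degree, nsmul_eq_mul]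
    _ = ∑ i, ∑ j ∈ G.neighborFinset i, w j ^ 2 := by
        rw [Finset.sum_sigma', Finset.sum_sigma']
        apply Finset.sum_nbij' (fun p => ⟨p.2, p.1⟩) (fun p => ⟨p.2, p.1⟩) <;>
          simp [SimpleGraph.adj_comm]
    _ ≤ ∑ i, (∑ j ∈ G.neighborFinset i, w j) ^ 2 := by
        refine Finset.sum_le_sum fun i _ => Finset.sum_sq_le_sq_sum_of_nonneg ?_
        exact fun j _ => le_trans zero_le_one (hw1 j)
    _ = _ := by simp [hstep]

/-- Spectral norm bound: `‖A w‖² ≤ M² ‖w‖²` where `M` bounds all `|eigenvalues|`. -/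
lemma aux_spec (M : ℝ) (hM : ∀ i, |(G.adjMatrix_isHermitian).eigenvalues i| ≤ M)
    (w : Fin n → ℝ) :
    ∑ v, ((G.adjMatrix ℝ) *ᵥ w) v ^ 2 ≤ M ^ 2 * ∑ v, w v ^ 2 := by
  have hA := G.adjMatrix_isHermitian
  set U : Matrix (Fin n) (Fin n) ℝ := (hA.eigenvectorUnitary : Matrix (Fin n) (Fin n) ℝ) with hUdef
  have hUt : star U = Uᵀ := by
    ext i j; simp [Matrix.star_apply]
  have hU1 : U * star U = 1 := (Matrix.mem_unitaryGroup_iff).mp hA.eigenvectorUnitary.2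
  have hU2 : star U * U = 1 := (Matrix.mem_unitaryGroup_iff').mp hA.eigenvectorUnitary.2
  have hD : Matrix.diagonal (RCLike.ofReal ∘ hA.eigenvalues) = Matrix.diagonal hA.eigenvalues := by
    rfl
  have hspec : G.adjMatrix ℝ = U * Matrix.diagonal hA.eigenvalues * star U := by
    rw [← hD]; exact hA.spectral_theorem
  set z : Fin n → ℝ := star U *ᵥ w with hz
  have hAw : (G.adjMatrix ℝ) *ᵥ w = U *ᵥ (Matrix.diagonal hA.eigenvalues *ᵥ z) := by
    conv_lhs => rw [hspec]
    rw [Matrix.mulVec_mulVec, Matrix.mulVec_mulVec]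
  have e1 : ∑ v, ((G.adjMatrix ℝ) *ᵥ w) v ^ 2
      = (Matrix.diagonal hA.eigenvalues *ᵥ z) ⬝ᵥ (Matrix.diagonal hA.eigenvalues *ᵥ z) := by
    rw [show ∀ u : Fin n → ℝ, ∑ v, u v ^ 2 = u ⬝ᵥ u from fun u => by
      simp [dotProduct, sq], hAw]
    exact aux_dot_preserve U (by rw [← hUt]; exact hU2) _
  have e2 : z ⬝ᵥ z = ∑ v, w v ^ 2 := by
    rw [show ∀ u : Fin n → ℝ, ∑ v, u v ^ 2 = u ⬝ᵥ u from fun u => by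
      simp [dotProduct, sq]]
    have : (star U)ᵀ * star U = 1 := by
      rw [hUt, Matrix.transpose_transpose, ← hUt, hU1]
    exact aux_dot_preserve (star U) this w
  rw [e1, ← e2]
  have : (Matrix.diagonal hA.eigenvalues *ᵥ z) ⬝ᵥ (Matrix.diagonal hA.eigenvalues *ᵥ z)
      = ∑ i, hA.eigenvalues i ^ 2 * z i ^ 2 := by
    simp [dotProduct, Matrix.mulVec_diagonal]
    ring_nf
  rw [this, dotProduct, Finset.mul_sum]
  refine Finset.sum_le_sum fun i _ => ?_
  have h1 : hA.eigenvalues i ^ 2 ≤ M ^ 2 := by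
    have := hM i
    nlinarith [abs_nonneg (hA.eigenvalues i), sq_abs (hA.eigenvalues i)]
  have h2 : (0:ℝ) ≤ z i ^ 2 := sq_nonneg _
  calc hA.eigenvalues i ^ 2 * z i ^ 2 ≤ M ^ 2 * z i ^ 2 := by nlinarith
  _ = M ^ 2 * (z i * z i) := by ring

end AuxLemmas

lemma aux_g_nonneg {x : ℝ} (hx : 0 < x) : 0 ≤ x - 1 - Real.log x := by
  have := Real.log_le_sub_one_of_pos hx; linarith

lemma aux_g_mono {a b : ℝ} (ha : 1 ≤ a) (hab : a ≤ b) :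
    a - 1 - Real.log a ≤ b - 1 - Real.log b := by
  have ha0 : 0 < a := by linarith
  have hb0 : 0 < b := by linarith
  have h1 : Real.log b - Real.log a = Real.log (b / a) := (Real.log_div hb0.ne' ha0.ne').symm
  have h2 : Real.log (b / a) ≤ b / a - 1 := Real.log_le_sub_one_of_pos (by positivity)
  have h3 : b / a - 1 = (b - a) / a := by field_simp
  have h4 : (b - a) / a ≤ b - a := div_le_self (by linarith) ha
  linarith

lemma aux_det_log {n : ℕ} (G : SimpleGraph (Fin n)) [DecidableRel G.Adj]
    (hdet : (G.adjMatrix ℝ).det ≠ 0) :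
    Real.log |(G.adjMatrix ℝ).det| =
      ∑ i, Real.log |(G.adjMatrix_isHermitian).eigenvalues i| := by
  have hA := G.adjMatrix_isHermitian
  have hd : (G.adjMatrix ℝ).det = ∏ i, hA.eigenvalues i := by
    simpa using hA.det_eq_prod_eigenvalues
  have hne : ∀ i : Fin n, hA.eigenvalues i ≠ 0 := by
    rw [hd] at hdet
    exact fun i => Finset.prod_ne_zero_iff.mp hdet i (Finset.mem_univ i)
  rw [hd, Finset.abs_prod, Real.log_prod]
  exact fun i _ => abs_ne_zero.mpr (hne i)

open scoped Matrix in
theorem graph_energy_lower_bound_walk_sequence_nonsingular {n : ℕ}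
    (G : SimpleGraph (Fin n)) [DecidableRel G.Adj]
    (hconn : G.Connected) (hn : 2 ≤ n)
    (hdet : (G.adjMatrix ℝ).det ≠ 0)
    (γ : ℕ → ℝ)
    (hγ : ∀ k, γ k =
      Real.sqrt ((∑ v, (((G.adjMatrix ℝ) ^ (k + 1)) *ᵥ (fun _ => (1 : ℝ))) v ^ 2) /
        (∑ v, (((G.adjMatrix ℝ) ^ k) *ᵥ (fun _ => (1 : ℝ))) v ^ 2))) :
    ∀ k : ℕ,
      G.energy ≥
        γ k + ((n : ℝ) - 1) +
          Real.log |(G.adjMatrix ℝ).det| - Real.log (γ k) := by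
  intro k
  have hA := G.adjMatrix_isHermitian
  set lam : Fin n → ℝ := hA.eigenvalues with hlam
  have hne : ∀ i : Fin n, lam i ≠ 0 := by
    have hd : (G.adjMatrix ℝ).det = ∏ i, lam i := by simpa using hA.det_eq_prod_eigenvalues
    rw [hd] at hdet
    exact fun i => Finset.prod_ne_zero_iff.mp hdet i (Finset.mem_univ i)
  have hNE : Nonempty (Fin n) := Fin.pos_iff_nonempty.mp (by omega)
  have hnonempty : (Finset.univ : Finset (Fin n)).Nonempty := Finset.univ_nonempty
  obtain ⟨i0, _, hi0⟩ := Finset.exists_max_image Finset.univ (fun i => |lam i|) hnonempty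
  set M : ℝ := |lam i0| with hM
  have hMle : ∀ i, |lam i| ≤ M := fun i => hi0 i (Finset.mem_univ i)
  set a : ℕ → ℝ := fun k => ∑ v, (((G.adjMatrix ℝ) ^ k) *ᵥ (fun _ => (1 : ℝ))) v ^ 2 with ha
  have ha_pos : ∀ k, 0 < a k := by
    intro j
    have h1 : ∀ v : Fin n, (1:ℝ) ≤ (((G.adjMatrix ℝ) ^ j) *ᵥ (fun _ => (1 : ℝ))) v ^ 2 := by
      intro v
      have := aux_one_le G hconn hn j v
      nlinarith
    calc (0:ℝ) < n := by exact_mod_cast Nat.lt_of_lt_of_le Nat.zero_lt_two hn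
    _ = ∑ _v : Fin n, (1:ℝ) := by simp
    _ ≤ a j := Finset.sum_le_sum fun v _ => h1 v
  have ha_mono : ∀ j, a j ≤ a (j+1) := fun j => aux_mono G hconn hn j
  have hq1 : (1:ℝ) ≤ a (k+1) / a k := (one_le_div (ha_pos k)).mpr (ha_mono k)
  have hγ1 : 1 ≤ γ k := by
    rw [hγ k]
    exact Real.one_le_sqrt.mpr hq1
  have hγM : γ k ≤ M := by
    have hb : a (k+1) ≤ M ^ 2 * a k := by
      have hw : ((G.adjMatrix ℝ) ^ (k+1)) *ᵥ (fun _ => (1 : ℝ))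
          = (G.adjMatrix ℝ) *ᵥ (((G.adjMatrix ℝ) ^ k) *ᵥ (fun _ => (1 : ℝ))) := by
        rw [Matrix.mulVec_mulVec, ← pow_succ']
      calc a (k+1)
          = ∑ v, ((G.adjMatrix ℝ) *ᵥ (((G.adjMatrix ℝ) ^ k) *ᵥ (fun _ => (1 : ℝ)))) v ^ 2 := by
            rw [ha]; simp only [hw]
      _ ≤ M ^ 2 * a k := aux_spec G M hMle _
    have hq : a (k+1) / a k ≤ M ^ 2 := (div_le_iff₀ (ha_pos k)).mpr (by linarith [hb])
    rw [hγ k]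
    calc Real.sqrt (a (k+1) / a k) ≤ Real.sqrt (M ^ 2) := Real.sqrt_le_sqrt hq
    _ = |M| := Real.sqrt_sq_eq_abs M
    _ = M := abs_of_nonneg (abs_nonneg _)
  have hlog : Real.log |(G.adjMatrix ℝ).det| = ∑ i, Real.log |lam i| := aux_det_log G hdet
  have habs_pos : ∀ i, 0 < |lam i| := fun i => abs_pos.mpr (hne i)
  have hsum : ∑ i, (|lam i| - 1 - Real.log |lam i|)
      = G.energy - n - Real.log |(G.adjMatrix ℝ).det| := by
    rw [hlog, SimpleGraph.energy]
    rw [Finset.sum_sub_distrib, Finset.sum_sub_distrib]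
    simp
    rfl
  have hsingle : M - 1 - Real.log M ≤ ∑ i, (|lam i| - 1 - Real.log |lam i|) := by
    refine Finset.single_le_sum (f := fun i => |lam i| - 1 - Real.log |lam i|)
      (fun i _ => aux_g_nonneg (habs_pos i)) (Finset.mem_univ i0)
  have hmono := aux_g_mono hγ1 hγM
  linarith [hsum, hsingle, hmono]
end
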